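/- (Normed Rademacher complexity of robust regression gradients.) In the robust regression setting, suppose the norm ‖·‖ admits a convex function Ψ with Ψ(x) ≥ (1/2)‖x‖², Ψ(0) = 0, and Ψ β-smooth with respect to ‖·‖. Assume max{|ρ'(s)|, |ρ''(s)|} ≤ C_ρ on [−(BR+Y₀), BR+Y₀]. Then for any x_1,…,x_n with ‖x_t‖ ≤ R and any y_1,…,y_n ∈ [−Y₀, Y₀]: E_ε sup_{w : ‖w‖_* ≤ B} ‖Σ_{t=1}^n ε_t ∇ℓ(w;x_t,y_t)‖ ≤ (4 C_ρ B R + 2 C_ρ) · R · sqrt(2 β n), where ℓ(w;x,y) = ρ(⟨w,x⟩ − y), ∇ denotes the gradient in w, and ε_1,…,ε_n are i.i.d. Rademacher variables. -/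

import Mathlib

open MeasureTheory Finset
open scoped RealInnerProductSpace

noncomputable section

/-- `Euc d` is Euclidean space `ℝ^d`. -/
abbrev Euc (d : ℕ) : Type := EuclideanSpace ℝ (Fin d)

/-- Expectation over i.i.d. Rademacher signs `ε ∈ {±1}ⁿ`. -/
def Esign (n : ℕ) (f : (Fin n → ℝ) → ℝ) : ℝ :=
  (∑ ε : Fin n → Bool, f (fun t => if ε t then 1 else -1)) / 2 ^ n

/-- A (genuine) norm on `ℝ^d`, given as an arbitrary real-valued function. -/
def IsNorm {d : ℕ} (N : Euc d → ℝ) : Prop :=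
  (∀ x y, N (x + y) ≤ N x + N y) ∧ (∀ (a : ℝ) (x : Euc d), N (a • x) = |a| * N x) ∧
    (∀ x, N x = 0 → x = 0)

/-- The dual norm of `N`: `‖w‖_* = sup {⟨w,x⟩ : N x ≤ 1}`. -/
def dualNorm {d : ℕ} (N : Euc d → ℝ) (w : Euc d) : ℝ :=
  sSup {r : ℝ | ∃ x : Euc d, N x ≤ 1 ∧ r = ⟪w, x⟫}

namespace RobustAux

lemma bdd_range {ι : Sort*} (f : ι → ℝ) (b : ℝ) (h : ∀ i, f i ≤ b) :
    BddAbove (Set.range f) := ⟨b, by rintro r ⟨i, rfl⟩; exact h i⟩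

lemma sign_mem (ε : Fin n → Bool) : ∀ t, (if ε t then (1:ℝ) else -1) = 1 ∨ (if ε t then (1:ℝ) else -1) = -1 := by
  intro t; by_cases h : ε t <;> simp [h]

lemma Esign_mono {n : ℕ} {f g : (Fin n → ℝ) → ℝ}
    (h : ∀ v : Fin n → ℝ, (∀ t, v t = 1 ∨ v t = -1) → f v ≤ g v) :
    Esign n f ≤ Esign n g := by
  unfold Esign
  apply div_le_div_of_nonneg_right _ (by positivity)
  exact Finset.sum_le_sum fun ε _ => h _ (sign_mem ε)

lemma Esign_add {n : ℕ} (f g : (Fin n → ℝ) → ℝ) :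
    Esign n (fun v => f v + g v) = Esign n f + Esign n g := by
  unfold Esign; rw [← add_div, ← Finset.sum_add_distrib]

lemma Esign_const {n : ℕ} (c : ℝ) : Esign n (fun _ => c) = c := by
  unfold Esign
  rw [Finset.sum_const, Finset.card_univ]
  simp [Fintype.card_fun]

lemma Esign_smul {n : ℕ} (c : ℝ) (f : (Fin n → ℝ) → ℝ) :
    Esign n (fun v => c * f v) = c * Esign n f := by
  unfold Esign; rw [← Finset.mul_sum, mul_div_assoc]

lemma Esign_nonneg {n : ℕ} {f : (Fin n → ℝ) → ℝ}
    (h : ∀ v : Fin n → ℝ, (∀ t, v t = 1 ∨ v t = -1) → 0 ≤ f v) : 0 ≤ Esign n f := by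
  have := Esign_mono (n := n) (f := fun _ => (0:ℝ)) (g := f) (fun v hv => h v hv)
  rwa [Esign_const] at this

/-- pairing lemma at coordinate `k`. -/
lemma Esign_pair {n : ℕ} (k : Fin n) {f g : (Fin n → ℝ) → ℝ}
    (h : ∀ v : Fin n → ℝ, (∀ t, v t = 1 ∨ v t = -1) →
      f v + f (Function.update v k (-(v k))) ≤ g v + g (Function.update v k (-(v k)))) :
    Esign n f ≤ Esign n g := by
  classical
  have hinv : Function.Involutive (fun ε : Fin n → Bool => Function.update ε k (!(ε k))) := by
    intro ε; funext t
    by_cases ht : t = k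
    · subst ht; simp
    · simp [Function.update_of_ne ht]
  set e : Equiv.Perm (Fin n → Bool) := hinv.toPerm _
  have key : ∀ (F : (Fin n → ℝ) → ℝ) (ε : Fin n → Bool),
      F (fun t => if e ε t then (1:ℝ) else -1)
        = F (Function.update (fun t => if ε t then (1:ℝ) else -1) k
            (-((fun t => if ε t then (1:ℝ) else -1) k))) := by
    intro F ε
    congr 1
    funext t
    by_cases ht : t = k
    · subst ht
      simp only [e, Function.Involutive.toPerm, Equiv.coe_fn_mk, Function.update_self]
      by_cases h : ε t <;> simp [h]
    · simp only [e, Function.Involutive.toPerm, Equiv.coe_fn_mk,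
        Function.update_of_ne ht]
  have hsum : ∀ F : (Fin n → ℝ) → ℝ,
      (∑ ε : Fin n → Bool, F (fun t => if ε t then (1:ℝ) else -1))
        = (∑ ε : Fin n → Bool, F (Function.update (fun t => if ε t then (1:ℝ) else -1) k
            (-((fun t => if ε t then (1:ℝ) else -1) k)))) := by
    intro F
    rw [← Equiv.sum_comp e (fun ε => F (fun t => if ε t then (1:ℝ) else -1))]
    exact Finset.sum_congr rfl fun ε _ => key F ε
  unfold Esign
  apply div_le_div_of_nonneg_right _ (by positivity)
  have h2 : (2:ℝ) * (∑ ε : Fin n → Bool, f (fun t => if ε t then (1:ℝ) else -1))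
      ≤ 2 * (∑ ε : Fin n → Bool, g (fun t => if ε t then (1:ℝ) else -1)) := by
    have lhs := hsum f
    have rhs := hsum g
    rw [two_mul, two_mul]
    nth_rewrite 2 [lhs]
    nth_rewrite 2 [rhs]
    rw [← Finset.sum_add_distrib, ← Finset.sum_add_distrib]
    exact Finset.sum_le_sum fun ε _ => h _ (sign_mem ε)
  linarith



lemma sup_pair_core {ι : Type*} [Nonempty ι] (A φ c : ι → ℝ) (e L : ℝ)
    (he : e = 1 ∨ e = -1) (hL : 0 ≤ L)
    (hbA : BddAbove (Set.range fun p => A p + e * (L * c p)))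
    (hbB : BddAbove (Set.range fun p => A p + (-e) * (L * c p)))
    (hLip : ∀ p q, |φ p - φ q| ≤ L * |c p - c q|) :
    (⨆ p, A p + e * φ p) + (⨆ p, A p + (-e) * φ p)
      ≤ (⨆ p, A p + e * (L * c p)) + (⨆ p, A p + (-e) * (L * c p)) := by
  set T1 := ⨆ p, A p + e * (L * c p) with hT1
  set T2 := ⨆ p, A p + (-e) * (L * c p) with hT2
  have he1 : |e| = 1 := by rcases he with h | h <;> simp [h]
  have key : ∀ p q, (A p + e * φ p) + (A q + (-e) * φ q) ≤ T1 + T2 := by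
    intro p q
    have h1 : e * (φ p - φ q) ≤ |φ p - φ q| := by
      calc e * (φ p - φ q) ≤ |e * (φ p - φ q)| := le_abs_self _
      _ = |φ p - φ q| := by rw [abs_mul, he1, one_mul]
    have h2 : |φ p - φ q| ≤ |e * (L * c p) - e * (L * c q)| := by
      have : |e * (L * c p) - e * (L * c q)| = |e| * |L * c p - L * c q| := by
        rw [← abs_mul]; ring_nf
      rw [this, he1, one_mul]
      calc |φ p - φ q| ≤ L * |c p - c q| := hLip p q
      _ = |L * c p - L * c q| := by
          rw [← mul_sub, abs_mul, abs_of_nonneg hL]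
    have h3 := le_trans h1 h2
    rw [abs_eq_max_neg] at h3
    rcases (le_max_iff.mp h3) with hc | hc
    · have i1 : A p + e * (L * c p) ≤ T1 := le_ciSup hbA p
      have i2 : A q + (-e) * (L * c q) ≤ T2 := le_ciSup hbB q
      linarith
    · have i1 : A q + e * (L * c q) ≤ T1 := le_ciSup hbA q
      have i2 : A p + (-e) * (L * c p) ≤ T2 := le_ciSup hbB p
      linarith
  have h1 : (⨆ p, A p + e * φ p) ≤ (T1 + T2) - (⨆ p, A p + (-e) * φ p) := by
    apply ciSup_le
    intro p
    have : (⨆ q, A q + (-e) * φ q) ≤ (T1 + T2) - (A p + e * φ p) := by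
      apply ciSup_le
      intro q
      linarith [key p q]
    linarith
  linarith

/-- The finite Rademacher comparison/contraction inequality. -/
lemma contraction {n : ℕ} {ι : Type*} [Nonempty ι]
    (c φc : Fin n → ι → ℝ) (L K : ℝ) (hL : 0 ≤ L)
    (hb : ∀ t p, |c t p| ≤ K ∧ |φc t p| ≤ K)
    (hLip : ∀ t p q, |φc t p - φc t q| ≤ L * |c t p - c t q|) :
    Esign n (fun v => ⨆ p, ∑ t, v t * φc t p)
      ≤ Esign n (fun v => ⨆ p, ∑ t, v t * (L * c t p)) := by
  classical
  set M : Finset (Fin n) → Fin n → ι → ℝ :=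
    fun s t p => if t ∈ s then L * c t p else φc t p with hM
  set F : Finset (Fin n) → (Fin n → ℝ) → ℝ :=
    fun s v => ⨆ p, ∑ t, v t * M s t p with hF
  have hK : n = 0 ∨ 0 ≤ K := by
    rcases Nat.eq_zero_or_pos n with h | h
    · exact Or.inl h
    · exact Or.inr ((abs_nonneg _).trans (hb ⟨0, h⟩ (Classical.arbitrary ι)).1)
  -- step
  have step : ∀ (s : Finset (Fin n)) (k : Fin n), k ∉ s →
      Esign n (F s) ≤ Esign n (F (insert k s)) := by
    intro s k hk
    have hK0 : 0 ≤ K := (abs_nonneg _).trans (hb k (Classical.arbitrary ι)).1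
    apply Esign_pair k
    intro v hv
    -- rewrite the four iSup's
    have habs : ∀ t, |v t| = 1 := by
      intro t; rcases hv t with h | h <;> simp [h]
    set A : ι → ℝ := fun p => ∑ t ∈ univ.erase k, v t * M s t p with hA
    have hMb : ∀ t p, |M s t p| ≤ L * K + K := by
      intro t p
      by_cases h : t ∈ s <;> simp only [hM, h, if_true, if_false]
      · calc |L * c t p| = L * |c t p| := by rw [abs_mul, abs_of_nonneg hL]
          _ ≤ L * K := by nlinarith [(hb t p).1]
          _ ≤ L * K + K := by linarith
      · exact le_trans (hb t p).2 (by nlinarith)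
    have hAb : ∀ p, |A p| ≤ n * (L * K + K) := by
      intro p
      calc |A p| ≤ ∑ t ∈ univ.erase k, |v t * M s t p| := Finset.abs_sum_le_sum_abs _ _
        _ ≤ ∑ t ∈ univ.erase k, (L * K + K) := by
            apply Finset.sum_le_sum
            intro t _
            rw [abs_mul, habs t, one_mul]
            exact hMb t p
        _ = (univ.erase k).card * (L * K + K) := by rw [Finset.sum_const, nsmul_eq_mul]
        _ ≤ n * (L * K + K) := by
            have h1 : ((univ.erase k).card : ℝ) ≤ n := by
              have := Finset.card_erase_le (s := (univ : Finset (Fin n))) (a := k)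
              have h2 : (univ : Finset (Fin n)).card = n := Finset.card_univ.trans (Fintype.card_fin n)
              exact_mod_cast le_trans this (le_of_eq h2)
            nlinarith [add_nonneg (mul_nonneg hL hK0) hK0]
    -- sum splitting: for any w (update or not), F s w = ⨆ p, (∑ erase…) + w k * (…)
    have hsplit : ∀ (w : Fin n → ℝ) (s' : Finset (Fin n)),
        F s' w = ⨆ p, (∑ t ∈ univ.erase k, w t * M s' t p) + w k * M s' k p := by
      intro w s'
      apply congrArg iSup
      funext p
      rw [← Finset.sum_erase_add univ _ (Finset.mem_univ k)]
    -- M agreement off k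
    have hMagree : ∀ t, t ≠ k → ∀ p, M (insert k s) t p = M s t p := by
      intro t ht p
      simp only [hM, Finset.mem_insert]
      by_cases h : t ∈ s
      · simp [h, ht]
      · simp [h, ht]
    have hupd_erase : ∀ (s' : Finset (Fin n)) p,
        (∑ t ∈ univ.erase k, (Function.update v k (-(v k))) t * M s' t p)
          = ∑ t ∈ univ.erase k, v t * M s' t p := by
      intro s' p
      apply Finset.sum_congr rfl
      intro t ht
      rw [Function.update_of_ne (Finset.ne_of_mem_erase ht)]
    have e1 : F s v = ⨆ p, A p + v k * φc k p := by
      rw [hsplit v s]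
      apply congrArg iSup; funext p
      simp only [hA, hM, hk, if_neg hk]
    have e2 : F s (Function.update v k (-(v k))) = ⨆ p, A p + (-(v k)) * φc k p := by
      rw [hsplit _ s]
      apply congrArg iSup; funext p
      rw [hupd_erase s p, Function.update_self]
      simp only [hA, hM, if_neg hk]
    have e3 : F (insert k s) v = ⨆ p, A p + v k * (L * c k p) := by
      rw [hsplit v (insert k s)]
      apply congrArg iSup; funext p
      have : (∑ t ∈ univ.erase k, v t * M (insert k s) t p) = A p := by
        apply Finset.sum_congr rfl
        intro t ht
        rw [hMagree t (Finset.ne_of_mem_erase ht)]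
      rw [this]
      simp only [hM, Finset.mem_insert_self, if_pos]
    have e4 : F (insert k s) (Function.update v k (-(v k)))
        = ⨆ p, A p + (-(v k)) * (L * c k p) := by
      rw [hsplit _ (insert k s)]
      apply congrArg iSup; funext p
      rw [hupd_erase (insert k s) p, Function.update_self]
      have : (∑ t ∈ univ.erase k, v t * M (insert k s) t p) = A p := by
        apply Finset.sum_congr rfl
        intro t ht
        rw [hMagree t (Finset.ne_of_mem_erase ht)]
      rw [this]
      simp only [hM, Finset.mem_insert_self, if_pos]
    rw [e1, e2, e3, e4]
    have heLc : ∀ (ee : ℝ), |ee| = 1 → ∀ p, ee * (L * c k p) ≤ L * K := by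
      intro ee hee p
      calc ee * (L * c k p) ≤ |ee * (L * c k p)| := le_abs_self _
        _ = |L * c k p| := by rw [abs_mul, hee, one_mul]
        _ = L * |c k p| := by rw [abs_mul, abs_of_nonneg hL]
        _ ≤ L * K := by nlinarith [(hb k p).1]
    apply sup_pair_core A (φc k) (c k) (v k) L (hv k) hL
    · apply bdd_range _ (n * (L * K + K) + L * K)
      intro p
      have := hAb p
      have := heLc (v k) (habs k) p
      have := le_abs_self (A p)
      linarith
    · apply bdd_range _ (n * (L * K + K) + L * K)
      intro p
      have h1 := hAb p
      have h2 : (-(v k)) * (L * c k p) ≤ L * K := by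
        apply heLc
        rw [abs_neg]; exact habs k
      have := le_abs_self (A p)
      linarith
    · exact hLip k
  -- induction over finsets
  have main : ∀ s : Finset (Fin n), Esign n (F ∅) ≤ Esign n (F s) := by
    intro s
    induction s using Finset.induction_on with
    | empty => exact le_refl _
    | insert _ _ hk ih => exact le_trans ih (step _ _ hk)
  have hfin := main univ
  have hFe : F ∅ = fun v => ⨆ p, ∑ t, v t * φc t p := by
    funext v; apply congrArg iSup; funext p
    apply Finset.sum_congr rfl
    intro t _
    simp [hM]
  have hFu : F univ = fun v => ⨆ p, ∑ t, v t * (L * c t p) := by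
    funext v; apply congrArg iSup; funext p
    apply Finset.sum_congr rfl
    intro t _
    simp [hM]
  rwa [hFe, hFu] at hfin


lemma Esign_sqrt_le {n : ℕ} (h : (Fin n → ℝ) → ℝ)
    (hpos : ∀ v : Fin n → ℝ, (∀ t, v t = 1 ∨ v t = -1) → 0 ≤ h v) :
    Esign n (fun v => Real.sqrt (h v)) ≤ Real.sqrt (Esign n h) := by
  have ha : 0 ≤ Esign n (fun v => Real.sqrt (h v)) :=
    Esign_nonneg fun v _ => Real.sqrt_nonneg _
  have hb : 0 ≤ Esign n h := Esign_nonneg hpos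
  rw [Real.le_sqrt ha hb]
  unfold Esign
  rw [div_pow]
  rw [div_le_div_iff₀ (by positivity) (by positivity)]
  have hcs := Finset.sum_mul_sq_le_sq_mul_sq Finset.univ
    (fun ε : Fin n → Bool => Real.sqrt (h (fun t => if ε t then (1:ℝ) else -1)))
    (fun _ => (1:ℝ))
  simp only [mul_one, one_pow] at hcs
  have hsq : ∀ ε : Fin n → Bool,
      (Real.sqrt (h (fun t => if ε t then (1:ℝ) else -1)))^2
        = h (fun t => if ε t then (1:ℝ) else -1) := fun ε =>
    Real.sq_sqrt (hpos _ (sign_mem ε))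
  rw [Finset.sum_congr rfl (fun ε _ => hsq ε)] at hcs
  have hcard : (∑ _ε : Fin n → Bool, (1:ℝ)) = 2^n := by
    rw [Finset.sum_const, Finset.card_univ, nsmul_eq_mul]
    simp [Fintype.card_fun]
  rw [hcard] at hcs
  calc (∑ ε : Fin n → Bool, Real.sqrt (h (fun t => if ε t then (1:ℝ) else -1)))^2 * (2:ℝ)^n
      ≤ ((∑ ε : Fin n → Bool, h (fun t => if ε t then (1:ℝ) else -1)) * 2^n) * 2^n := by
        apply mul_le_mul_of_nonneg_right hcs (by positivity)
    _ = (∑ ε : Fin n → Bool, h (fun t => if ε t then (1:ℝ) else -1)) * ((2:ℝ)^n)^2 := by ring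

lemma esign_psi {d n : ℕ} (N : Euc d → ℝ) (Ψ : Euc d → ℝ) (β : ℝ) (hzero : Ψ 0 = 0)
    (hsmooth : ∀ a b : Euc d,
      Ψ a ≤ Ψ b + ⟪gradient Ψ b, a - b⟫ + (β / 2) * (N (a - b)) ^ 2)
    (hNhom : ∀ (a : ℝ) (z : Euc d), N (a • z) = |a| * N z)
    (x : Fin n → Euc d) :
    Esign n (fun v => Ψ (∑ t, v t • x t)) ≤ (β / 2) * ∑ t, (N (x t)) ^ 2 := by
  classical
  have key : ∀ k : ℕ, k ≤ n →
      Esign n (fun v => Ψ (∑ t ∈ univ.filter (fun t : Fin n => (t : ℕ) < k), v t • x t))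
        ≤ (β / 2) * ∑ t ∈ univ.filter (fun t : Fin n => (t : ℕ) < k), (N (x t)) ^ 2 := by
    intro k
    induction k with
    | zero =>
      intro _
      have hf : univ.filter (fun t : Fin n => (t : ℕ) < 0) = ∅ := by
        apply Finset.filter_eq_empty_iff.mpr; intro t _; omega
      rw [hf]
      simp only [Finset.sum_empty, mul_zero]
      rw [Esign_const]
      rw [hzero]
    | succ k ih =>
      intro hk1
      have hk : k < n := hk1
      set k' : Fin n := ⟨k, hk⟩ with hk'
      have hfil : univ.filter (fun t : Fin n => (t : ℕ) < k + 1)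
          = insert k' (univ.filter (fun t : Fin n => (t : ℕ) < k)) := by
        ext t
        simp only [Finset.mem_filter, Finset.mem_univ, true_and, Finset.mem_insert,
          Fin.ext_iff, hk']
        omega
      have hnotin : k' ∉ univ.filter (fun t : Fin n => (t : ℕ) < k) := by
        simp [hk']
      have hne : ∀ t ∈ univ.filter (fun t : Fin n => (t : ℕ) < k), t ≠ k' := by
        intro t ht
        simp only [Finset.mem_filter] at ht
        intro h
        rw [h] at ht
        simp [hk'] at ht
      have pairstep : Esign n
            (fun v => Ψ (∑ t ∈ univ.filter (fun t : Fin n => (t : ℕ) < k + 1), v t • x t))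
          ≤ Esign n (fun v =>
            Ψ (∑ t ∈ univ.filter (fun t : Fin n => (t : ℕ) < k), v t • x t)
              + (β / 2) * (N (x k')) ^ 2) := by
        apply Esign_pair k'
        intro v hv
        set S := ∑ t ∈ univ.filter (fun t : Fin n => (t : ℕ) < k), v t • x t with hS
        have hSupd : ∑ t ∈ univ.filter (fun t : Fin n => (t : ℕ) < k),
            (Function.update v k' (-(v k'))) t • x t = S := by
          apply Finset.sum_congr rfl
          intro t ht
          rw [Function.update_of_ne (hne t ht)]
        have hsum1 : ∑ t ∈ univ.filter (fun t : Fin n => (t : ℕ) < k + 1), v t • x t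
            = S + v k' • x k' := by
          rw [hfil, Finset.sum_insert hnotin, add_comm]
        have hsum2 : ∑ t ∈ univ.filter (fun t : Fin n => (t : ℕ) < k + 1),
            (Function.update v k' (-(v k'))) t • x t = S + (-(v k')) • x k' := by
          rw [hfil, Finset.sum_insert hnotin, add_comm, hSupd, Function.update_self]
        rw [hsum1, hsum2, hSupd]
        have habs : |v k'| = 1 := by rcases hv k' with h | h <;> simp [h]
        have hNsq : ∀ e : ℝ, |e| = 1 → (N (e • x k')) ^ 2 = (N (x k')) ^ 2 := by
          intro e he
          rw [hNhom, he, one_mul]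
        have h1 := hsmooth (S + v k' • x k') S
        have h2 := hsmooth (S + (-(v k')) • x k') S
        rw [add_sub_cancel_left] at h1 h2
        rw [real_inner_smul_right] at h1 h2
        rw [hNsq _ habs] at h1
        rw [hNsq (-(v k')) (by rw [abs_neg]; exact habs)] at h2
        linarith
      have hconst : Esign n (fun v =>
            Ψ (∑ t ∈ univ.filter (fun t : Fin n => (t : ℕ) < k), v t • x t)
              + (β / 2) * (N (x k')) ^ 2)
          = Esign n (fun v =>
            Ψ (∑ t ∈ univ.filter (fun t : Fin n => (t : ℕ) < k), v t • x t))
              + (β / 2) * (N (x k')) ^ 2 := by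
        rw [Esign_add, Esign_const]
      calc Esign n (fun v => Ψ (∑ t ∈ univ.filter (fun t : Fin n => (t : ℕ) < k + 1), v t • x t))
          ≤ _ := pairstep
        _ = _ := hconst
        _ ≤ (β / 2) * ∑ t ∈ univ.filter (fun t : Fin n => (t : ℕ) < k), (N (x t)) ^ 2
              + (β / 2) * (N (x k')) ^ 2 := by
            have := ih (le_of_lt hk)
            linarith
        _ = (β / 2) * ∑ t ∈ univ.filter (fun t : Fin n => (t : ℕ) < k + 1), (N (x t)) ^ 2 := by
            rw [hfil, Finset.sum_insert hnotin]
            ring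
  have := key n (le_refl n)
  rwa [Finset.filter_true_of_mem (fun t _ => t.2)] at this


lemma N_sum_le {d : ℕ} {N : Euc d → ℝ} (hadd : ∀ a b, N (a + b) ≤ N a + N b)
    (h0 : N 0 = 0) {α : Type*} (s : Finset α) (f : α → Euc d) :
    N (∑ i ∈ s, f i) ≤ ∑ i ∈ s, N (f i) := by
  induction s using Finset.cons_induction with
  | empty => simp [h0]
  | cons a s ha ih =>
    rw [Finset.sum_cons, Finset.sum_cons]
    exact le_trans (hadd _ _) (by linarith)

lemma hahn {d : ℕ} (N : Euc d → ℝ) (hNadd : ∀ a b, N (a + b) ≤ N a + N b)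
    (hNhom : ∀ (a : ℝ) (z : Euc d), N (a • z) = |a| * N z) (hN0 : N 0 = 0)
    (hNnn : ∀ z, 0 ≤ N z) (hdual0 : dualNorm N 0 = 0) (z : Euc d) :
    ∃ u : Euc d, dualNorm N u ≤ 1 ∧ N z ≤ ⟪u, z⟫ := by
  by_cases hz : z = 0
  · refine ⟨0, by rw [hdual0]; norm_num, ?_⟩
    subst hz; rw [inner_zero_right, hN0]
  · set f := LinearPMap.mkSpanSingleton (K := ℝ) (L := ℝ) (σ := RingHom.id ℝ) z (N z) hz with hfdef
    have hddom : ∀ p : f.domain, (f p : ℝ) ≤ N p := by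
      rintro ⟨p, hp⟩
      have hp' : p ∈ Submodule.span ℝ {z} := by
        rwa [hfdef, LinearPMap.domain_mkSpanSingleton] at hp
      obtain ⟨a, rfl⟩ := Submodule.mem_span_singleton.mp hp'
      have happ : f ⟨a • z, hp⟩ = a • (N z) := LinearPMap.mkSpanSingleton'_apply z (N z) _ a hp
      rw [happ]
      rcases le_or_gt 0 a with ha | ha
      · rw [hNhom, abs_of_nonneg ha, smul_eq_mul]
      · have h1 : a • N z ≤ 0 := by
          rw [smul_eq_mul]
          exact mul_nonpos_of_nonpos_of_nonneg (le_of_lt ha) (hNnn z)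
        exact le_trans h1 (hNnn _)
    obtain ⟨g, hg1, hg2⟩ := exists_extension_of_le_sublinear f N
      (fun c hc xx => by rw [hNhom, abs_of_pos hc]) hNadd hddom
    set u : Euc d := (InnerProductSpace.toDual ℝ (Euc d)).symm
      (LinearMap.toContinuousLinearMap g) with hu
    have huap : ∀ v : Euc d, ⟪u, v⟫ = g v := by
      intro v
      rw [hu, InnerProductSpace.toDual_symm_apply]
      simp
    refine ⟨u, ?_, ?_⟩
    · have hne : (0:ℝ) ∈ {r : ℝ | ∃ xx : Euc d, N xx ≤ 1 ∧ r = ⟪u, xx⟫} :=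
        ⟨0, by rw [hN0]; norm_num, by rw [inner_zero_right]⟩
      apply csSup_le ⟨0, hne⟩
      rintro r ⟨xx, hxx, rfl⟩
      rw [huap]
      exact le_trans (hg2 xx) hxx
    · have hmem : z ∈ f.domain := by
        rw [hfdef, LinearPMap.domain_mkSpanSingleton]
        exact Submodule.mem_span_singleton_self z
      have h1 := hg1 ⟨z, hmem⟩
      have h2 : f ⟨z, hmem⟩ = N z := by
        have := LinearPMap.mkSpanSingleton_apply ℝ ℝ (σ := RingHom.id ℝ) hz (N z)
        convert this using 2
      rw [huap]
      simp only [h2] at h1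
      rw [h1]


lemma sum_bound {n : ℕ} {ι : Sort*} (v : Fin n → ℝ) (hv : ∀ t, |v t| = 1)
    (q : Fin n → ι → ℝ) (b : ℝ) (hq : ∀ t p, |q t p| ≤ b) :
    ∀ p, (∑ t, v t * q t p) ≤ n * b := by
  intro p
  have h1 : ∀ t, v t * q t p ≤ b := fun t =>
    le_trans (le_abs_self _) (by rw [abs_mul, hv t, one_mul]; exact hq t p)
  calc (∑ t, v t * q t p) ≤ ∑ _t : Fin n, b := Finset.sum_le_sum fun t _ => h1 t
    _ = n * b := by rw [Finset.sum_const, Finset.card_univ, Fintype.card_fin, nsmul_eq_mul]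

lemma sq_lip {a b : ℝ} (ha : |a| ≤ 2) (hb : |b| ≤ 2) : |a ^ 2 - b ^ 2| ≤ 4 * |a - b| := by
  have h1 : a ^ 2 - b ^ 2 = (a + b) * (a - b) := by ring
  rw [h1, abs_mul]
  have h2 : |a + b| ≤ 4 := by
    cases abs_le.mp ha; cases abs_le.mp hb; rw [abs_le]; constructor <;> linarith
  nlinarith [abs_nonneg (a - b), abs_nonneg (a + b)]

end RobustAux

/-- auxiliary parameter space: pairs of a dual-ball element and a unit-dual-ball element. -/
abbrev DualPair {d : ℕ} (N : Euc d → ℝ) (B : ℝ) : Type :=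
  {w : Euc d // dualNorm N w ≤ B} × {u : Euc d // dualNorm N u ≤ 1}


open RobustAux

set_option maxHeartbeats 4000000 in
theorem robust_regression_gradient_rademacher_complexity {d n : ℕ}
    (N : Euc d → ℝ) (hN : IsNorm N)
    (Ψ : Euc d → ℝ) (hconv : ConvexOn ℝ Set.univ Ψ) (hdiff : Differentiable ℝ Ψ)
    (hlb : ∀ x : Euc d, (1 / 2) * (N x) ^ 2 ≤ Ψ x) (hzero : Ψ 0 = 0) (β : ℝ)
    (hsmooth : ∀ x y : Euc d,
      Ψ x ≤ Ψ y + ⟪gradient Ψ y, x - y⟫ + (β / 2) * (N (x - y)) ^ 2)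
    (R B Y₀ Cρ : ℝ) (hR : 0 ≤ R) (hB : 0 ≤ B) (hY : 0 ≤ Y₀)
    (ρ : ℝ → ℝ) (hρpos : ∀ s, 0 ≤ ρ s)
    (hρd1 : Differentiable ℝ ρ) (hρd2 : Differentiable ℝ (deriv ρ))
    (hbound : ∀ s ∈ Set.Icc (-(B * R + Y₀)) (B * R + Y₀),
      |deriv ρ s| ≤ Cρ ∧ |deriv (deriv ρ) s| ≤ Cρ)
    (x : Fin n → Euc d) (hx : ∀ t, N (x t) ≤ R)
    (y : Fin n → ℝ) (hy : ∀ t, y t ∈ Set.Icc (-Y₀) Y₀) :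
    Esign n (fun ε => ⨆ w : {w : Euc d // dualNorm N w ≤ B},
        N (∑ t, ε t • gradient (fun w' => ρ (⟪w', x t⟫ - y t)) (w : Euc d))) ≤
      (4 * Cρ * B * R + 2 * Cρ) * R * Real.sqrt (2 * β * n) := by
  classical
  obtain ⟨hNadd, hNhom, hNdef⟩ := hN
  have hN0 : N 0 = 0 := by
    have := hNhom 0 0; simpa using this
  have hNneg : ∀ z : Euc d, N (-z) = N z := by
    intro z; have := hNhom (-1) z; simpa using this
  have hNnn : ∀ z : Euc d, 0 ≤ N z := by
    intro z
    have h1 := hNadd z (-z)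
    rw [add_neg_cancel, hN0, hNneg] at h1
    linarith
  have hBRY : 0 ≤ B * R + Y₀ := by positivity
  have hCρ : 0 ≤ Cρ :=
    le_trans (abs_nonneg _) (hbound 0 ⟨by linarith, by linarith⟩).1
  have hRHS : 0 ≤ (4 * Cρ * B * R + 2 * Cρ) * R * Real.sqrt (2 * β * n) := by
    have h1 : 0 ≤ 4 * Cρ * B * R + 2 * Cρ := by
      have := mul_nonneg (mul_nonneg hCρ hB) hR
      nlinarith
    have h2 := Real.sqrt_nonneg (2 * β * (n:ℝ))
    exact mul_nonneg (mul_nonneg h1 hR) h2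
  have hdual0 : dualNorm N 0 = 0 := by
    unfold dualNorm
    have hset : {r : ℝ | ∃ x : Euc d, N x ≤ 1 ∧ r = ⟪(0:Euc d), x⟫} = {0} := by
      ext r
      constructor
      · rintro ⟨xx, hxx, rfl⟩
        simp [inner_zero_left]
      · intro hr
        rw [Set.mem_singleton_iff] at hr
        subst hr
        exact ⟨0, by rw [hN0]; norm_num, by rw [inner_zero_left]⟩
    rw [hset, csSup_singleton]
  haveI hWne : Nonempty {w : Euc d // dualNorm N w ≤ B} := ⟨⟨0, by rw [hdual0]; exact hB⟩⟩
  rcases Nat.eq_zero_or_pos d with hd0 | hd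
  · -- degenerate case d = 0
    subst hd0
    have hz : ∀ z : Euc 0, z = 0 := fun z => by ext i; exact i.elim0
    have hbody : (fun ε : Fin n → ℝ => ⨆ w : {w : Euc 0 // dualNorm N w ≤ B},
        N (∑ t, ε t • gradient (fun w' => ρ (⟪w', x t⟫ - y t)) (w : Euc 0)))
        = fun _ => 0 := by
      funext v
      have hzz : ∀ w : {w : Euc 0 // dualNorm N w ≤ B},
          N (∑ t, v t • gradient (fun w' => ρ (⟪w', x t⟫ - y t)) (w : Euc 0)) = 0 := by
        intro w
        rw [hz (∑ t, v t • gradient (fun w' => ρ (⟪w', x t⟫ - y t)) (w : Euc 0)), hN0]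
      calc (⨆ w : {w : Euc 0 // dualNorm N w ≤ B},
            N (∑ t, v t • gradient (fun w' => ρ (⟪w', x t⟫ - y t)) (w : Euc 0)))
          = ⨆ _w : {w : Euc 0 // dualNorm N w ≤ B}, (0:ℝ) := by
            exact congrArg iSup (funext hzz)
        _ = 0 := ciSup_const
    rw [hbody, Esign_const]
    exact hRHS
  -- main case d ≥ 1
  have he₀norm : ‖EuclideanSpace.single (⟨0, hd⟩ : Fin d) (1:ℝ)‖ = 1 := by
    rw [EuclideanSpace.norm_single]; norm_num
  set e₀ : Euc d := EuclideanSpace.single (⟨0, hd⟩ : Fin d) (1:ℝ) with he₀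
  have he₀ne : e₀ ≠ 0 := by
    intro h
    rw [h] at he₀norm
    simp at he₀norm
  have hβ1 : 1 ≤ β := by
    have hNe : 0 < N e₀ := by
      rcases lt_or_eq_of_le (hNnn e₀) with h | h
      · exact h
      · exact absurd (hNdef e₀ h.symm) he₀ne
    have h1 := hsmooth e₀ 0
    have h2 := hsmooth (-e₀) 0
    rw [sub_zero, hzero] at h1 h2
    rw [inner_neg_right, hNneg] at h2
    have l1 := hlb e₀
    have l2 := hlb (-e₀)
    rw [hNneg] at l2
    nlinarith [mul_pos hNe hNe]
  have hβ0 : 0 ≤ β := by linarith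
  -- norm equivalence
  set C : ℝ := ∑ i : Fin d, N (EuclideanSpace.single i 1) with hCdef
  have hCnn : 0 ≤ C := Finset.sum_nonneg fun i _ => hNnn _
  have hcoord : ∀ (z : Euc d) (i : Fin d), |z i| ≤ ‖z‖ := by
    intro z i
    rw [EuclideanSpace.norm_eq]
    have h1 : |z i| = Real.sqrt (|z i| ^ 2) := (Real.sqrt_sq (abs_nonneg _)).symm
    rw [h1]
    apply Real.sqrt_le_sqrt
    rw [sq_abs]
    have := Finset.single_le_sum (f := fun j => ‖z j‖ ^ 2) (fun j _ => by positivity)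
      (Finset.mem_univ i)
    simpa [Real.norm_eq_abs, sq_abs] using this
  have hupper : ∀ z : Euc d, N z ≤ C * ‖z‖ := by
    intro z
    have hrepr : z = ∑ i, z i • EuclideanSpace.single i (1:ℝ) := by
      have h := (EuclideanSpace.basisFun (Fin d) ℝ).sum_repr z
      simp only [EuclideanSpace.basisFun_apply, EuclideanSpace.basisFun_repr] at h
      exact h.symm
    calc N z = N (∑ i, z i • EuclideanSpace.single i (1:ℝ)) := by rw [← hrepr]
      _ ≤ ∑ i, N (z i • EuclideanSpace.single i (1:ℝ)) := N_sum_le hNadd hN0 _ _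
      _ = ∑ i, |z i| * N (EuclideanSpace.single i (1:ℝ)) := by
          exact Finset.sum_congr rfl fun i _ => hNhom _ _
      _ ≤ ∑ i, ‖z‖ * N (EuclideanSpace.single i (1:ℝ)) := by
          apply Finset.sum_le_sum
          intro i _
          exact mul_le_mul_of_nonneg_right (hcoord z i) (hNnn _)
      _ = C * ‖z‖ := by rw [← Finset.mul_sum, hCdef]; ring
  have hlipN : ∀ a b : Euc d, |N a - N b| ≤ C * ‖a - b‖ := by
    have key : ∀ a b : Euc d, N a - N b ≤ C * ‖a - b‖ := by
      intro a b
      have h1 : a = b + (a - b) := by abel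
      have h2 : N a ≤ N b + N (a - b) := by
        calc N a = N (b + (a - b)) := by rw [← h1]
          _ ≤ N b + N (a - b) := hNadd _ _
      have h3 := hupper (a - b)
      linarith
    intro a b
    rw [abs_le]
    constructor
    · have := key b a
      rw [norm_sub_rev] at this
      linarith
    · exact key a b
  have hcont : Continuous N := by
    have hlw : LipschitzWith (Real.toNNReal C) N := by
      apply LipschitzWith.of_dist_le_mul
      intro a b
      rw [Real.dist_eq, dist_eq_norm, Real.coe_toNNReal _ hCnn]
      exact hlipN a b
    exact hlw.continuous
  have hsph : (Metric.sphere (0:Euc d) 1).Nonempty :=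
    ⟨e₀, by rw [mem_sphere_zero_iff_norm]; exact he₀norm⟩
  obtain ⟨z₀, hz₀s, hz₀min⟩ :=
    (isCompact_sphere (0:Euc d) 1).exists_isMinOn hsph hcont.continuousOn
  have hz₀norm : ‖z₀‖ = 1 := mem_sphere_zero_iff_norm.mp hz₀s
  set m : ℝ := N z₀ with hmdef
  have hmpos : 0 < m := by
    rcases lt_or_eq_of_le (hNnn z₀) with h | h
    · exact h
    · exfalso
      have hz0 : z₀ = 0 := hNdef z₀ h.symm
      rw [hz0, norm_zero] at hz₀norm
      norm_num at hz₀norm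
  have hlower : ∀ z : Euc d, m * ‖z‖ ≤ N z := by
    intro z
    by_cases hz : z = 0
    · subst hz
      rw [norm_zero, mul_zero, hN0]
    · have hnz : 0 < ‖z‖ := norm_pos_iff.mpr hz
      have hmem : (‖z‖⁻¹ • z) ∈ Metric.sphere (0:Euc d) 1 := by
        rw [mem_sphere_zero_iff_norm, norm_smul, norm_inv, norm_norm]
        field_simp
      have h1 : m ≤ N (‖z‖⁻¹ • z) := hz₀min hmem
      rw [hNhom, abs_of_nonneg (inv_nonneg.mpr (norm_nonneg z))] at h1
      calc m * ‖z‖ ≤ (‖z‖⁻¹ * N z) * ‖z‖ := mul_le_mul_of_nonneg_right h1 (le_of_lt hnz)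
        _ = N z := by field_simp
  -- dual norm facts
  have hbddS : ∀ w : Euc d, BddAbove {r : ℝ | ∃ x : Euc d, N x ≤ 1 ∧ r = ⟪w, x⟫} := by
    intro w
    refine ⟨‖w‖ * (1 / m), ?_⟩
    rintro r ⟨xx, hxx, rfl⟩
    have h1 : ‖xx‖ ≤ 1 / m := by
      have := hlower xx
      rw [le_div_iff₀ hmpos]
      nlinarith
    calc ⟪w, xx⟫ ≤ ‖w‖ * ‖xx‖ := real_inner_le_norm w xx
      _ ≤ ‖w‖ * (1 / m) := mul_le_mul_of_nonneg_left h1 (norm_nonneg w)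
  have hSmem0 : ∀ w : Euc d, (0:ℝ) ∈ {r : ℝ | ∃ x : Euc d, N x ≤ 1 ∧ r = ⟪w, x⟫} :=
    fun w => ⟨0, by rw [hN0]; norm_num, by rw [inner_zero_right]⟩
  have hdnn : ∀ w : Euc d, 0 ≤ dualNorm N w := fun w => le_csSup (hbddS w) (hSmem0 w)
  have hdinner : ∀ w z : Euc d, ⟪w, z⟫ ≤ dualNorm N w * N z := by
    intro w z
    by_cases hz : z = 0
    · subst hz
      rw [inner_zero_right, hN0, mul_zero]
    · have hNz : 0 < N z := by
        rcases lt_or_eq_of_le (hNnn z) with h | h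
        · exact h
        · exact absurd (hNdef z h.symm) hz
      have hmem : ⟪w, (N z)⁻¹ • z⟫ ∈ {r : ℝ | ∃ x : Euc d, N x ≤ 1 ∧ r = ⟪w, x⟫} := by
        refine ⟨(N z)⁻¹ • z, ?_, rfl⟩
        rw [hNhom, abs_of_nonneg (inv_nonneg.mpr (le_of_lt hNz))]
        rw [inv_mul_cancel₀ (ne_of_gt hNz)]
      have h1 : ⟪w, (N z)⁻¹ • z⟫ ≤ dualNorm N w := le_csSup (hbddS w) hmem
      rw [real_inner_smul_right] at h1
      calc ⟪w, z⟫ = N z * ((N z)⁻¹ * ⟪w, z⟫) := by field_simp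
        _ ≤ N z * dualNorm N w := mul_le_mul_of_nonneg_left h1 (le_of_lt hNz)
        _ = dualNorm N w * N z := mul_comm _ _
  have habs_inner : ∀ w z : Euc d, |⟪w, z⟫| ≤ dualNorm N w * N z := by
    intro w z
    rw [abs_le]
    constructor
    · have := hdinner w (-z)
      rw [inner_neg_right, hNneg] at this
      linarith
    · exact hdinner w z
  have hdneg : ∀ u : Euc d, dualNorm N (-u) = dualNorm N u := by
    intro u
    unfold dualNorm
    congr 1
    ext r
    constructor
    · rintro ⟨xx, h1, rfl⟩
      exact ⟨-xx, by rw [hNneg]; exact h1, by rw [inner_neg_left, inner_neg_right]⟩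
    · rintro ⟨xx, h1, rfl⟩
      exact ⟨-xx, by rw [hNneg]; exact h1, by rw [inner_neg_left, inner_neg_right, neg_neg]⟩
  have HB : ∀ z : Euc d, ∃ u : Euc d, dualNorm N u ≤ 1 ∧ N z ≤ ⟪u, z⟫ :=
    hahn N hNadd hNhom hN0 hNnn hdual0
  haveI hUne : Nonempty {u : Euc d // dualNorm N u ≤ 1} := ⟨⟨0, by rw [hdual0]; norm_num⟩⟩
  -- gradient computation
  have hgrad : ∀ (t : Fin n) (w : Euc d),
      gradient (fun w' => ρ (⟪w', x t⟫ - y t)) w = deriv ρ (⟪w, x t⟫ - y t) • x t := by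
    intro t w
    apply HasGradientAt.gradient
    rw [hasGradientAt_iff_hasFDerivAt]
    have hfe : (fun w' : Euc d => ⟪w', x t⟫ - y t) = fun w' => (innerSL ℝ (x t)) w' - y t := by
      funext w'
      simp [real_inner_comm, mul_comm]
    have h1 : HasFDerivAt (fun w' : Euc d => ⟪w', x t⟫ - y t) (innerSL ℝ (x t) : Euc d →L[ℝ] ℝ) w := by
      rw [hfe]
      exact ((innerSL ℝ (x t)).hasFDerivAt).sub_const (y t)
    have h2 : HasDerivAt ρ (deriv ρ (⟪w, x t⟫ - y t)) (⟪w, x t⟫ - y t) := (hρd1 _).hasDerivAt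
    have h3 := h2.comp_hasFDerivAt w h1
    have h4 : (InnerProductSpace.toDual ℝ (Euc d)) (deriv ρ (⟪w, x t⟫ - y t) • x t)
        = deriv ρ (⟪w, x t⟫ - y t) • (innerSL ℝ (x t) : Euc d →L[ℝ] ℝ) := by
      ext v; simp
    rw [h4]
    exact h3
  -- coefficient bounds
  set r : Fin n → Euc d → ℝ := fun t w => deriv ρ (⟪w, x t⟫ - y t) with hrdef
  have harg : ∀ (w : Euc d), dualNorm N w ≤ B → ∀ t,
      (⟪w, x t⟫ - y t) ∈ Set.Icc (-(B * R + Y₀)) (B * R + Y₀) := by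
    intro w hw t
    have h1 : |⟪w, x t⟫| ≤ B * R := by
      have h2 := habs_inner w (x t)
      have h3 : dualNorm N w * N (x t) ≤ B * R :=
        mul_le_mul hw (hx t) (hNnn _) hB
      linarith
    obtain ⟨hy1, hy2⟩ := hy t
    obtain ⟨ha1, ha2⟩ := abs_le.mp h1
    rw [Set.mem_Icc]
    constructor <;> linarith
  have hrb : ∀ (w : Euc d), dualNorm N w ≤ B → ∀ t, |r t w| ≤ Cρ :=
    fun w hw t => (hbound _ (harg w hw t)).1
  have hrLip : ∀ (t : Fin n) (a b : Euc d), dualNorm N a ≤ B → dualNorm N b ≤ B →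
      |r t a - r t b| ≤ Cρ * |⟪a, x t⟫ - ⟪b, x t⟫| := by
    intro t a b ha hb
    have key : ∀ p q : ℝ, p ∈ Set.Icc (-(B * R + Y₀)) (B * R + Y₀) →
        q ∈ Set.Icc (-(B * R + Y₀)) (B * R + Y₀) →
        |deriv ρ p - deriv ρ q| ≤ Cρ * |p - q| := by
      intro p q hp hq
      have := Convex.norm_image_sub_le_of_norm_deriv_le (f := deriv ρ)
        (fun s _ => (hρd2 s)) (fun s hs => by rw [Real.norm_eq_abs]; exact (hbound s hs).2)
        (convex_Icc _ _) hq hp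
      simpa [Real.norm_eq_abs] using this
    have h1 := key _ _ (harg a ha t) (harg b hb t)
    have h2 : (⟪a, x t⟫ - y t) - (⟪b, x t⟫ - y t) = ⟪a, x t⟫ - ⟪b, x t⟫ := by ring
    rw [h2] at h1
    exact h1
  -- trivial cases via zero gradients
  have trivial_case : (∀ (w : Euc d), dualNorm N w ≤ B → ∀ t : Fin n,
      deriv ρ (⟪w, x t⟫ - y t) • x t = (0 : Euc d)) →
      Esign n (fun ε => ⨆ w : {w : Euc d // dualNorm N w ≤ B},
        N (∑ t, ε t • gradient (fun w' => ρ (⟪w', x t⟫ - y t)) (w : Euc d))) ≤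
      (4 * Cρ * B * R + 2 * Cρ) * R * Real.sqrt (2 * β * n) := by
    intro hzero'
    have hbody : (fun ε : Fin n → ℝ => ⨆ w : {w : Euc d // dualNorm N w ≤ B},
        N (∑ t, ε t • gradient (fun w' => ρ (⟪w', x t⟫ - y t)) (w : Euc d)))
        = fun _ => 0 := by
      funext v
      have hzz : ∀ w : {w : Euc d // dualNorm N w ≤ B},
          N (∑ t, v t • gradient (fun w' => ρ (⟪w', x t⟫ - y t)) (w : Euc d)) = 0 := by
        intro w
        have hsum : (∑ t, v t • gradient (fun w' => ρ (⟪w', x t⟫ - y t)) (w : Euc d))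
            = (0 : Euc d) := by
          apply Finset.sum_eq_zero
          intro t _
          rw [hgrad t w, hzero' (w : Euc d) w.2 t, smul_zero]
        rw [hsum, hN0]
      calc (⨆ w : {w : Euc d // dualNorm N w ≤ B},
            N (∑ t, v t • gradient (fun w' => ρ (⟪w', x t⟫ - y t)) (w : Euc d)))
          = ⨆ _w : {w : Euc d // dualNorm N w ≤ B}, (0:ℝ) := congrArg iSup (funext hzz)
        _ = 0 := ciSup_const
    rw [hbody, Esign_const]
    exact hRHS
  rcases eq_or_lt_of_le hCρ with hCρ0 | hCρpos
  · apply trivial_case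
    intro w hw t
    have := hrb w hw t
    rw [← hCρ0] at this
    have hr0 : r t w = 0 := abs_eq_zero.mp (le_antisymm this (abs_nonneg _))
    rw [hrdef] at hr0
    simp only at hr0
    rw [hr0, zero_smul]
  rcases eq_or_lt_of_le hR with hR0 | hRpos
  · apply trivial_case
    intro w hw t
    have hx0 : x t = 0 := by
      apply hNdef
      have := hx t
      rw [← hR0] at this
      exact le_antisymm this (hNnn _)
    rw [hx0, smul_zero]
  -- MAIN CASE
  -- the Rademacher average of N (∑ v t • x t)
  set M : ℝ := Esign n (fun v => N (∑ t, v t • x t)) with hMdef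
  have hMnn : 0 ≤ M := Esign_nonneg fun v _ => hNnn _
  have hMbound : M ≤ R * Real.sqrt (β * n) := by
    have h1 : ∀ v : Fin n → ℝ, N (∑ t, v t • x t) ≤ Real.sqrt (2 * Ψ (∑ t, v t • x t)) := by
      intro v
      have hΨnn : 0 ≤ Ψ (∑ t, v t • x t) := by
        have := hlb (∑ t, v t • x t)
        nlinarith [sq_nonneg (N (∑ t, v t • x t))]
      rw [Real.le_sqrt (hNnn _) (by linarith)]
      have := hlb (∑ t, v t • x t)
      linarith
    have h2 : M ≤ Esign n (fun v => Real.sqrt (2 * Ψ (∑ t, v t • x t))) :=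
      Esign_mono fun v _ => h1 v
    have h3 : Esign n (fun v => Real.sqrt (2 * Ψ (∑ t, v t • x t)))
        ≤ Real.sqrt (Esign n (fun v => 2 * Ψ (∑ t, v t • x t))) := by
      apply Esign_sqrt_le
      intro v _
      have := hlb (∑ t, v t • x t)
      nlinarith [sq_nonneg (N (∑ t, v t • x t))]
    have h4 : Esign n (fun v => 2 * Ψ (∑ t, v t • x t))
        = 2 * Esign n (fun v => Ψ (∑ t, v t • x t)) := Esign_smul 2 _
    have h5 := esign_psi N Ψ β hzero hsmooth hNhom x
    have h6 : (∑ t : Fin n, (N (x t)) ^ 2) ≤ n * R ^ 2 := by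
      calc (∑ t : Fin n, (N (x t)) ^ 2) ≤ ∑ _t : Fin n, R ^ 2 :=
            Finset.sum_le_sum fun t _ => by nlinarith [hNnn (x t), hx t]
        _ = n * R ^ 2 := by
            rw [Finset.sum_const, Finset.card_univ, Fintype.card_fin, nsmul_eq_mul]
    have h7 : Esign n (fun v => 2 * Ψ (∑ t, v t • x t)) ≤ β * n * R ^ 2 := by
      rw [h4]
      have h8 : (β / 2) * (∑ t : Fin n, (N (x t)) ^ 2) ≤ (β / 2) * (n * R ^ 2) :=
        mul_le_mul_of_nonneg_left h6 (by linarith)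
      linarith
    calc M ≤ Real.sqrt (Esign n (fun v => 2 * Ψ (∑ t, v t • x t))) := le_trans h2 h3
      _ ≤ Real.sqrt (β * n * R ^ 2) := Real.sqrt_le_sqrt h7
      _ = R * Real.sqrt (β * n) := by
          rw [show β * (n:ℝ) * R ^ 2 = R ^ 2 * (β * n) by ring,
            Real.sqrt_mul (sq_nonneg R), Real.sqrt_sq hR]
  -- nonemptiness of the pair space
  haveI hPne : Nonempty (DualPair N B) :=
    ⟨⟨⟨0, by rw [hdual0]; exact hB⟩, ⟨0, by rw [hdual0]; norm_num⟩⟩⟩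
  have hCne : Cρ ≠ 0 := ne_of_gt hCρpos
  have hRne : R ≠ 0 := ne_of_gt hRpos
  -- bound |⟪u, x t⟫| ≤ R for u in the unit dual ball
  have hux : ∀ (u : Euc d), dualNorm N u ≤ 1 → ∀ t, |⟪u, x t⟫| ≤ R := by
    intro u hu t
    have h1 := habs_inner u (x t)
    have h2 : dualNorm N u * N (x t) ≤ 1 * R := mul_le_mul hu (hx t) (hNnn _) (by norm_num)
    rw [one_mul] at h2
    linarith
  have hffb : ∀ (t : Fin n) (w : {w : Euc d // dualNorm N w ≤ B}), |r t (w : Euc d) / Cρ| ≤ 1 := by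
    intro t w
    rw [abs_div, abs_of_pos hCρpos]
    exact div_le_one_of_le₀ (hrb _ w.2 t) hCρ
  have hggb : ∀ (t : Fin n) (u : {u : Euc d // dualNorm N u ≤ 1}), |⟪(u : Euc d), x t⟫ / R| ≤ 1 := by
    intro t u
    rw [abs_div, abs_of_pos hRpos]
    exact div_le_one_of_le₀ (hux _ u.2 t) hR
  have hfgP : ∀ (t : Fin n) (p : DualPair N B),
      |r t (p.1 : Euc d) / Cρ + ⟪(p.2 : Euc d), x t⟫ / R| ≤ 2 := by
    intro t p
    calc |r t (p.1 : Euc d) / Cρ + ⟪(p.2 : Euc d), x t⟫ / R|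
        ≤ |r t (p.1 : Euc d) / Cρ| + |⟪(p.2 : Euc d), x t⟫ / R| := abs_add_le _ _
      _ ≤ 2 := by have := hffb t p.1; have := hggb t p.2; linarith
  have hfgM : ∀ (t : Fin n) (p : DualPair N B),
      |r t (p.1 : Euc d) / Cρ - ⟪(p.2 : Euc d), x t⟫ / R| ≤ 2 := by
    intro t p
    calc |r t (p.1 : Euc d) / Cρ - ⟪(p.2 : Euc d), x t⟫ / R|
        ≤ |r t (p.1 : Euc d) / Cρ| + |⟪(p.2 : Euc d), x t⟫ / R| := abs_sub _ _
      _ ≤ 2 := by have := hffb t p.1; have := hggb t p.2; linarith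
  have hsqP : ∀ (t : Fin n) (p : DualPair N B),
      |(r t (p.1 : Euc d) / Cρ + ⟪(p.2 : Euc d), x t⟫ / R) ^ 2| ≤ 4 := by
    intro t p
    rw [abs_of_nonneg (sq_nonneg _), ← sq_abs]
    nlinarith [hfgP t p, abs_nonneg (r t (p.1 : Euc d) / Cρ + ⟪(p.2 : Euc d), x t⟫ / R)]
  have hsqM : ∀ (t : Fin n) (p : DualPair N B),
      |-(r t (p.1 : Euc d) / Cρ - ⟪(p.2 : Euc d), x t⟫ / R) ^ 2| ≤ 4 := by
    intro t p
    have h1 : (-(r t (p.1 : Euc d) / Cρ - ⟪(p.2 : Euc d), x t⟫ / R)) ^ 2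
        = (r t (p.1 : Euc d) / Cρ - ⟪(p.2 : Euc d), x t⟫ / R) ^ 2 := by ring
    rw [show |-(r t (p.1 : Euc d) / Cρ - ⟪(p.2 : Euc d), x t⟫ / R) ^ 2|
        = |(r t (p.1 : Euc d) / Cρ - ⟪(p.2 : Euc d), x t⟫ / R) ^ 2| by rw [abs_neg]]
    rw [abs_of_nonneg (sq_nonneg _), ← sq_abs]
    nlinarith [hfgM t p, abs_nonneg (r t (p.1 : Euc d) / Cρ - ⟪(p.2 : Euc d), x t⟫ / R)]
  -- the intermediate functionals
  set F1 : (Fin n → ℝ) → ℝ := fun v => ⨆ p : DualPair N B,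
    ∑ t, v t * (r t (p.1 : Euc d) * ⟪(p.2 : Euc d), x t⟫) with hF1def
  set F2a : (Fin n → ℝ) → ℝ := fun v => ⨆ p : DualPair N B,
    ∑ t, v t * ((r t (p.1 : Euc d) / Cρ + ⟪(p.2 : Euc d), x t⟫ / R) ^ 2) with hF2adef
  set F2b : (Fin n → ℝ) → ℝ := fun v => ⨆ p : DualPair N B,
    ∑ t, v t * (-(r t (p.1 : Euc d) / Cρ - ⟪(p.2 : Euc d), x t⟫ / R) ^ 2) with hF2bdef
  set F3a : (Fin n → ℝ) → ℝ := fun v => ⨆ p : DualPair N B,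
    ∑ t, v t * (4 * (r t (p.1 : Euc d) / Cρ + ⟪(p.2 : Euc d), x t⟫ / R)) with hF3adef
  set F3b : (Fin n → ℝ) → ℝ := fun v => ⨆ p : DualPair N B,
    ∑ t, v t * (4 * (r t (p.1 : Euc d) / Cρ - ⟪(p.2 : Euc d), x t⟫ / R)) with hF3bdef
  set G1 : (Fin n → ℝ) → ℝ := fun v => ⨆ w : {w : Euc d // dualNorm N w ≤ B},
    ∑ t, v t * (r t (w : Euc d) / Cρ) with hG1def
  set G1' : (Fin n → ℝ) → ℝ := fun v => ⨆ w : {w : Euc d // dualNorm N w ≤ B},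
    ∑ t, v t * (1 * ⟪(w : Euc d), x t⟫) with hG1'def
  set G2 : (Fin n → ℝ) → ℝ := fun v => ⨆ u : {u : Euc d // dualNorm N u ≤ 1},
    ∑ t, v t * (⟪(u : Euc d), x t⟫ / R) with hG2def
  set G3 : (Fin n → ℝ) → ℝ := fun v => ⨆ u : {u : Euc d // dualNorm N u ≤ 1},
    ∑ t, v t * (-(⟪(u : Euc d), x t⟫ / R)) with hG3def
  -- Step 1: duality
  have step1 : ∀ v : Fin n → ℝ, (∀ t, v t = 1 ∨ v t = -1) →
      (⨆ w : {w : Euc d // dualNorm N w ≤ B},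
        N (∑ t, v t • gradient (fun w' => ρ (⟪w', x t⟫ - y t)) (w : Euc d))) ≤ F1 v := by
    intro v hv
    have habs : ∀ t, |v t| = 1 := fun t => by rcases hv t with h | h <;> simp [h]
    have hq : ∀ (t : Fin n) (p : DualPair N B),
        |r t (p.1 : Euc d) * ⟪(p.2 : Euc d), x t⟫| ≤ Cρ * R := by
      intro t p
      rw [abs_mul]
      exact mul_le_mul (hrb _ p.1.2 t) (hux _ p.2.2 t) (abs_nonneg _) hCρ
    have hbdd : BddAbove (Set.range fun p : DualPair N B =>
        ∑ t, v t * (r t (p.1 : Euc d) * ⟪(p.2 : Euc d), x t⟫)) :=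
      bdd_range _ (n * (Cρ * R)) (sum_bound v habs _ _ hq)
    apply ciSup_le
    intro w
    have hGsum : (∑ t, v t • gradient (fun w' => ρ (⟪w', x t⟫ - y t)) (w : Euc d))
        = ∑ t, (v t * r t (w : Euc d)) • x t :=
      Finset.sum_congr rfl fun t _ => by rw [hgrad t (w : Euc d), smul_smul]
    rw [hGsum]
    obtain ⟨u, hu1, hu2⟩ := HB (∑ t, (v t * r t (w : Euc d)) • x t)
    have hinner : ⟪u, ∑ t, (v t * r t (w : Euc d)) • x t⟫
        = ∑ t, v t * (r t (w : Euc d) * ⟪u, x t⟫) := by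
      rw [inner_sum]
      exact Finset.sum_congr rfl fun t _ => by rw [real_inner_smul_right]; ring
    calc N (∑ t, (v t * r t (w : Euc d)) • x t)
        ≤ ⟪u, ∑ t, (v t * r t (w : Euc d)) • x t⟫ := hu2
      _ = ∑ t, v t * (r t (w : Euc d) * ⟪u, x t⟫) := hinner
      _ ≤ F1 v := by
          rw [hF1def]
          exact le_ciSup hbdd (⟨w, ⟨u, hu1⟩⟩ : DualPair N B)
  -- Step 2: product decomposition
  have step2 : ∀ v : Fin n → ℝ, (∀ t, v t = 1 ∨ v t = -1) →
      F1 v ≤ (Cρ * R / 4) * (F2a v + F2b v) := by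
    intro v hv
    have habs : ∀ t, |v t| = 1 := fun t => by rcases hv t with h | h <;> simp [h]
    have hbddA : BddAbove (Set.range fun p : DualPair N B =>
        ∑ t, v t * ((r t (p.1 : Euc d) / Cρ + ⟪(p.2 : Euc d), x t⟫ / R) ^ 2)) :=
      bdd_range _ (n * 4) (sum_bound v habs _ 4 hsqP)
    have hbddB : BddAbove (Set.range fun p : DualPair N B =>
        ∑ t, v t * (-(r t (p.1 : Euc d) / Cρ - ⟪(p.2 : Euc d), x t⟫ / R) ^ 2)) :=
      bdd_range _ (n * 4) (sum_bound v habs _ 4 hsqM)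
    rw [hF1def]
    apply ciSup_le
    intro p
    have hsum : ∑ t, v t * (r t (p.1 : Euc d) * ⟪(p.2 : Euc d), x t⟫)
        = (Cρ * R / 4) *
          ((∑ t, v t * ((r t (p.1 : Euc d) / Cρ + ⟪(p.2 : Euc d), x t⟫ / R) ^ 2))
            + (∑ t, v t * (-(r t (p.1 : Euc d) / Cρ - ⟪(p.2 : Euc d), x t⟫ / R) ^ 2))) := by
      rw [← Finset.sum_add_distrib, Finset.mul_sum]
      apply Finset.sum_congr rfl
      intro t _
      have hr1 : r t (p.1 : Euc d) = Cρ * (r t (p.1 : Euc d) / Cρ) := by field_simp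
      have hi1 : ⟪(p.2 : Euc d), x t⟫ = R * (⟪(p.2 : Euc d), x t⟫ / R) := by field_simp
      calc v t * (r t (p.1 : Euc d) * ⟪(p.2 : Euc d), x t⟫)
          = v t * ((Cρ * (r t (p.1 : Euc d) / Cρ)) * (R * (⟪(p.2 : Euc d), x t⟫ / R))) := by
            rw [← hr1, ← hi1]
        _ = Cρ * R / 4 *
            (v t * ((r t (p.1 : Euc d) / Cρ + ⟪(p.2 : Euc d), x t⟫ / R) ^ 2)
              + v t * (-(r t (p.1 : Euc d) / Cρ - ⟪(p.2 : Euc d), x t⟫ / R) ^ 2)) := by ring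
    rw [hsum]
    have i1 : (∑ t, v t * ((r t (p.1 : Euc d) / Cρ + ⟪(p.2 : Euc d), x t⟫ / R) ^ 2)) ≤ F2a v := by
      rw [hF2adef]; exact le_ciSup hbddA p
    have i2 : (∑ t, v t * (-(r t (p.1 : Euc d) / Cρ - ⟪(p.2 : Euc d), x t⟫ / R) ^ 2)) ≤ F2b v := by
      rw [hF2bdef]; exact le_ciSup hbddB p
    exact mul_le_mul_of_nonneg_left (add_le_add i1 i2) (by positivity)
  -- contractions for the squares
  have E3a : Esign n F2a ≤ Esign n F3a := by
    rw [hF2adef, hF3adef]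
    apply contraction
      (c := fun (t : Fin n) (p : DualPair N B) =>
        r t (p.1 : Euc d) / Cρ + ⟪(p.2 : Euc d), x t⟫ / R)
      (φc := fun (t : Fin n) (p : DualPair N B) =>
        (r t (p.1 : Euc d) / Cρ + ⟪(p.2 : Euc d), x t⟫ / R) ^ 2)
      (L := 4) (K := 4) (by norm_num)
    · intro t p
      exact ⟨le_trans (hfgP t p) (by norm_num), hsqP t p⟩
    · intro t p q
      exact sq_lip (hfgP t p) (hfgP t q)
  have E3b : Esign n F2b ≤ Esign n F3b := by
    rw [hF2bdef, hF3bdef]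
    apply contraction
      (c := fun (t : Fin n) (p : DualPair N B) =>
        r t (p.1 : Euc d) / Cρ - ⟪(p.2 : Euc d), x t⟫ / R)
      (φc := fun (t : Fin n) (p : DualPair N B) =>
        -(r t (p.1 : Euc d) / Cρ - ⟪(p.2 : Euc d), x t⟫ / R) ^ 2)
      (L := 4) (K := 4) (by norm_num)
    · intro t p
      exact ⟨le_trans (hfgM t p) (by norm_num), hsqM t p⟩
    · intro t p q
      have h1 : -(r t (p.1 : Euc d) / Cρ - ⟪(p.2 : Euc d), x t⟫ / R) ^ 2
          - (-(r t (q.1 : Euc d) / Cρ - ⟪(q.2 : Euc d), x t⟫ / R) ^ 2)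
          = -((r t (p.1 : Euc d) / Cρ - ⟪(p.2 : Euc d), x t⟫ / R) ^ 2
            - (r t (q.1 : Euc d) / Cρ - ⟪(q.2 : Euc d), x t⟫ / R) ^ 2) := by ring
      rw [h1, abs_neg]
      exact sq_lip (hfgM t p) (hfgM t q)
  -- splitting the linear parts
  have step4a : ∀ v : Fin n → ℝ, (∀ t, v t = 1 ∨ v t = -1) → F3a v ≤ 4 * (G1 v + G2 v) := by
    intro v hv
    have habs : ∀ t, |v t| = 1 := fun t => by rcases hv t with h | h <;> simp [h]
    have hbdd1 : BddAbove (Set.range fun w : {w : Euc d // dualNorm N w ≤ B} =>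
        ∑ t, v t * (r t (w : Euc d) / Cρ)) :=
      bdd_range _ (n * 1) (sum_bound v habs _ 1 hffb)
    have hbdd2 : BddAbove (Set.range fun u : {u : Euc d // dualNorm N u ≤ 1} =>
        ∑ t, v t * (⟪(u : Euc d), x t⟫ / R)) :=
      bdd_range _ (n * 1) (sum_bound v habs _ 1 hggb)
    rw [hF3adef]
    apply ciSup_le
    intro p
    have hsplit : ∑ t, v t * (4 * (r t (p.1 : Euc d) / Cρ + ⟪(p.2 : Euc d), x t⟫ / R))
        = 4 * ((∑ t, v t * (r t (p.1 : Euc d) / Cρ)) + ∑ t, v t * (⟪(p.2 : Euc d), x t⟫ / R)) := by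
      rw [← Finset.sum_add_distrib, Finset.mul_sum]
      exact Finset.sum_congr rfl fun t _ => by ring
    rw [hsplit]
    have i1 : (∑ t, v t * (r t (p.1 : Euc d) / Cρ)) ≤ G1 v := by
      rw [hG1def]; exact le_ciSup hbdd1 p.1
    have i2 : (∑ t, v t * (⟪(p.2 : Euc d), x t⟫ / R)) ≤ G2 v := by
      rw [hG2def]; exact le_ciSup hbdd2 p.2
    exact mul_le_mul_of_nonneg_left (add_le_add i1 i2) (by norm_num)
  have step4b : ∀ v : Fin n → ℝ, (∀ t, v t = 1 ∨ v t = -1) → F3b v ≤ 4 * (G1 v + G3 v) := by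
    intro v hv
    have habs : ∀ t, |v t| = 1 := fun t => by rcases hv t with h | h <;> simp [h]
    have hbdd1 : BddAbove (Set.range fun w : {w : Euc d // dualNorm N w ≤ B} =>
        ∑ t, v t * (r t (w : Euc d) / Cρ)) :=
      bdd_range _ (n * 1) (sum_bound v habs _ 1 hffb)
    have hbdd3 : BddAbove (Set.range fun u : {u : Euc d // dualNorm N u ≤ 1} =>
        ∑ t, v t * (-(⟪(u : Euc d), x t⟫ / R))) := by
      apply bdd_range _ (n * 1)
      apply sum_bound v habs _ 1
      intro t u
      rw [abs_neg]
      exact hggb t u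
    rw [hF3bdef]
    apply ciSup_le
    intro p
    have hsplit : ∑ t, v t * (4 * (r t (p.1 : Euc d) / Cρ - ⟪(p.2 : Euc d), x t⟫ / R))
        = 4 * ((∑ t, v t * (r t (p.1 : Euc d) / Cρ))
          + ∑ t, v t * (-(⟪(p.2 : Euc d), x t⟫ / R))) := by
      rw [← Finset.sum_add_distrib, Finset.mul_sum]
      exact Finset.sum_congr rfl fun t _ => by ring
    rw [hsplit]
    have i1 : (∑ t, v t * (r t (p.1 : Euc d) / Cρ)) ≤ G1 v := by
      rw [hG1def]; exact le_ciSup hbdd1 p.1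
    have i2 : (∑ t, v t * (-(⟪(p.2 : Euc d), x t⟫ / R))) ≤ G3 v := by
      rw [hG3def]; exact le_ciSup hbdd3 p.2
    exact mul_le_mul_of_nonneg_left (add_le_add i1 i2) (by norm_num)
  -- contraction for G1
  have E5 : Esign n G1 ≤ Esign n G1' := by
    rw [hG1def, hG1'def]
    apply contraction
      (c := fun (t : Fin n) (w : {w : Euc d // dualNorm N w ≤ B}) => ⟪(w : Euc d), x t⟫)
      (φc := fun (t : Fin n) (w : {w : Euc d // dualNorm N w ≤ B}) => r t (w : Euc d) / Cρ)
      (L := 1) (K := B * R + 1) (by norm_num)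
    · intro t w
      constructor
      · have h1 := habs_inner (w : Euc d) (x t)
        have h2 : dualNorm N (w : Euc d) * N (x t) ≤ B * R := mul_le_mul w.2 (hx t) (hNnn _) hB
        have : 0 ≤ B * R := mul_nonneg hB hR
        linarith
      · have := hffb t w
        have : 0 ≤ B * R := mul_nonneg hB hR
        linarith [hffb t w]
    · intro t a b
      rw [div_sub_div_same, abs_div, abs_of_pos hCρpos, div_le_iff₀ hCρpos, one_mul]
      calc |r t (a : Euc d) - r t (b : Euc d)|
          ≤ Cρ * |⟪(a : Euc d), x t⟫ - ⟪(b : Euc d), x t⟫| := hrLip t _ _ a.2 b.2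
        _ = |⟪(a : Euc d), x t⟫ - ⟪(b : Euc d), x t⟫| * Cρ := mul_comm _ _
  -- bounding the linear suprema pointwise
  have step6 : ∀ v : Fin n → ℝ, (∀ t, v t = 1 ∨ v t = -1) →
      G1' v ≤ B * N (∑ t, v t • x t) := by
    intro v hv
    rw [hG1'def]
    apply ciSup_le
    intro w
    have hsum : ∑ t, v t * (1 * ⟪(w : Euc d), x t⟫) = ⟪(w : Euc d), ∑ t, v t • x t⟫ := by
      rw [inner_sum]
      exact Finset.sum_congr rfl fun t _ => by rw [real_inner_smul_right]; ring
    rw [hsum]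
    calc ⟪(w : Euc d), ∑ t, v t • x t⟫
        ≤ dualNorm N (w : Euc d) * N (∑ t, v t • x t) := hdinner _ _
      _ ≤ B * N (∑ t, v t • x t) := mul_le_mul_of_nonneg_right w.2 (hNnn _)
  have step7 : ∀ v : Fin n → ℝ, (∀ t, v t = 1 ∨ v t = -1) →
      G2 v ≤ (1 / R) * N (∑ t, v t • x t) := by
    intro v hv
    rw [hG2def]
    apply ciSup_le
    intro u
    have hsum : ∑ t, v t * (⟪(u : Euc d), x t⟫ / R)
        = (1 / R) * ⟪(u : Euc d), ∑ t, v t • x t⟫ := by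
      rw [inner_sum, Finset.mul_sum]
      exact Finset.sum_congr rfl fun t _ => by rw [real_inner_smul_right]; ring
    rw [hsum]
    have h1 : ⟪(u : Euc d), ∑ t, v t • x t⟫ ≤ N (∑ t, v t • x t) := by
      calc ⟪(u : Euc d), ∑ t, v t • x t⟫
          ≤ dualNorm N (u : Euc d) * N (∑ t, v t • x t) := hdinner _ _
        _ ≤ 1 * N (∑ t, v t • x t) := mul_le_mul_of_nonneg_right u.2 (hNnn _)
        _ = N (∑ t, v t • x t) := one_mul _
    exact mul_le_mul_of_nonneg_left h1 (by positivity)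
  have step8 : ∀ v : Fin n → ℝ, (∀ t, v t = 1 ∨ v t = -1) →
      G3 v ≤ (1 / R) * N (∑ t, v t • x t) := by
    intro v hv
    rw [hG3def]
    apply ciSup_le
    intro u
    have hsum : ∑ t, v t * (-(⟪(u : Euc d), x t⟫ / R))
        = (1 / R) * ⟪-(u : Euc d), ∑ t, v t • x t⟫ := by
      rw [inner_sum, Finset.mul_sum]
      apply Finset.sum_congr rfl
      intro t _
      rw [inner_neg_left, real_inner_smul_right]
      ring
    rw [hsum]
    have h1 : ⟪-(u : Euc d), ∑ t, v t • x t⟫ ≤ N (∑ t, v t • x t) := by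
      calc ⟪-(u : Euc d), ∑ t, v t • x t⟫
          ≤ dualNorm N (-(u : Euc d)) * N (∑ t, v t • x t) := hdinner _ _
        _ = dualNorm N (u : Euc d) * N (∑ t, v t • x t) := by rw [hdneg]
        _ ≤ 1 * N (∑ t, v t • x t) := mul_le_mul_of_nonneg_right u.2 (hNnn _)
        _ = N (∑ t, v t • x t) := one_mul _
    exact mul_le_mul_of_nonneg_left h1 (by positivity)
  -- assemble at the level of expectations
  have EG1 : Esign n G1 ≤ B * M := by
    calc Esign n G1 ≤ Esign n G1' := E5
      _ ≤ Esign n (fun v => B * N (∑ t, v t • x t)) := Esign_mono step6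
      _ = B * M := by rw [Esign_smul, ← hMdef]
  have EG2 : Esign n G2 ≤ (1 / R) * M := by
    calc Esign n G2 ≤ Esign n (fun v => (1 / R) * N (∑ t, v t • x t)) := Esign_mono step7
      _ = (1 / R) * M := by rw [Esign_smul, ← hMdef]
  have EG3 : Esign n G3 ≤ (1 / R) * M := by
    calc Esign n G3 ≤ Esign n (fun v => (1 / R) * N (∑ t, v t • x t)) := Esign_mono step8
      _ = (1 / R) * M := by rw [Esign_smul, ← hMdef]
  have E4a : Esign n F3a ≤ 4 * (B * M + (1 / R) * M) := by
    calc Esign n F3a ≤ Esign n (fun v => 4 * (G1 v + G2 v)) := Esign_mono step4a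
      _ = 4 * (Esign n G1 + Esign n G2) := by rw [Esign_smul, Esign_add]
      _ ≤ 4 * (B * M + (1 / R) * M) := by linarith [EG1, EG2]
  have E4b : Esign n F3b ≤ 4 * (B * M + (1 / R) * M) := by
    calc Esign n F3b ≤ Esign n (fun v => 4 * (G1 v + G3 v)) := Esign_mono step4b
      _ = 4 * (Esign n G1 + Esign n G3) := by rw [Esign_smul, Esign_add]
      _ ≤ 4 * (B * M + (1 / R) * M) := by linarith [EG1, EG3]
  have Efin : Esign n (fun ε => ⨆ w : {w : Euc d // dualNorm N w ≤ B},
        N (∑ t, ε t • gradient (fun w' => ρ (⟪w', x t⟫ - y t)) (w : Euc d)))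
      ≤ (Cρ * R / 4) * ((4 * (B * M + (1 / R) * M)) + (4 * (B * M + (1 / R) * M))) := by
    have hc : (0:ℝ) ≤ Cρ * R / 4 := by positivity
    calc Esign n (fun ε => ⨆ w : {w : Euc d // dualNorm N w ≤ B},
          N (∑ t, ε t • gradient (fun w' => ρ (⟪w', x t⟫ - y t)) (w : Euc d)))
        ≤ Esign n F1 := Esign_mono step1
      _ ≤ Esign n (fun v => (Cρ * R / 4) * (F2a v + F2b v)) := Esign_mono step2
      _ = (Cρ * R / 4) * (Esign n F2a + Esign n F2b) := by rw [Esign_smul, Esign_add]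
      _ ≤ (Cρ * R / 4) * ((4 * (B * M + (1 / R) * M)) + (4 * (B * M + (1 / R) * M))) := by
          have h1 := le_trans E3a E4a
          have h2 := le_trans E3b E4b
          exact mul_le_mul_of_nonneg_left (add_le_add h1 h2) hc
  have hsimp : (Cρ * R / 4) * ((4 * (B * M + (1 / R) * M)) + (4 * (B * M + (1 / R) * M)))
      = 2 * Cρ * R * B * M + 2 * Cρ * M := by
    field_simp
    ring
  have hs2 : Real.sqrt (β * n) ≤ Real.sqrt (2 * β * n) := by
    apply Real.sqrt_le_sqrt
    have h1 : 0 ≤ β * (n:ℝ) := mul_nonneg hβ0 (Nat.cast_nonneg n)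
    linarith
  have hMs : M ≤ R * Real.sqrt (2 * β * n) :=
    le_trans hMbound (mul_le_mul_of_nonneg_left hs2 hR)
  have hfinal : 2 * Cρ * R * B * M + 2 * Cρ * M
      ≤ (4 * Cρ * B * R + 2 * Cρ) * R * Real.sqrt (2 * β * n) := by
    have s2nn := Real.sqrt_nonneg (2 * β * (n:ℝ))
    have c1 : (0:ℝ) ≤ 2 * Cρ * R * B :=
      mul_nonneg (mul_nonneg (mul_nonneg (by norm_num) hCρ) hR) hB
    have c2 : (0:ℝ) ≤ 2 * Cρ := by linarith
    have t1 : 2 * Cρ * R * B * M ≤ 2 * Cρ * R * B * (R * Real.sqrt (2 * β * n)) :=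
      mul_le_mul_of_nonneg_left hMs c1
    have t2 : 2 * Cρ * M ≤ 2 * Cρ * (R * Real.sqrt (2 * β * n)) :=
      mul_le_mul_of_nonneg_left hMs c2
    have t3 : (0:ℝ) ≤ 2 * Cρ * B * R * R * Real.sqrt (2 * β * (n:ℝ)) :=
      mul_nonneg (mul_nonneg (mul_nonneg (mul_nonneg c2 hB) hR) hR) s2nn
    have hring : (4 * Cρ * B * R + 2 * Cρ) * R * Real.sqrt (2 * β * (n:ℝ))
        = 2 * Cρ * R * B * (R * Real.sqrt (2 * β * (n:ℝ)))
          + 2 * Cρ * (R * Real.sqrt (2 * β * (n:ℝ)))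
          + 2 * Cρ * B * R * R * Real.sqrt (2 * β * (n:ℝ)) := by ring
    linarith
  calc Esign n (fun ε => ⨆ w : {w : Euc d // dualNorm N w ≤ B},
        N (∑ t, ε t • gradient (fun w' => ρ (⟪w', x t⟫ - y t)) (w : Euc d)))
      ≤ (Cρ * R / 4) * ((4 * (B * M + (1 / R) * M)) + (4 * (B * M + (1 / R) * M))) := Efin
    _ = 2 * Cρ * R * B * M + 2 * Cρ * M := hsimp
    _ ≤ (4 * Cρ * B * R + 2 * Cρ) * R * Real.sqrt (2 * β * n) := hfinal
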